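/- The maps φ ↦ φ_- and φ ↦ φ^+ are well defined self-maps of Hom(P,[n]) (i.e., φ_- and φ^+ are again isotone), and they form a Galois correspondence: for all φ, ψ ∈ Hom(P,[n]) one has φ_- ≤ ψ if and only if φ ≤ ψ^+. -/
import Mathlib


/-!
P is a finite poset, `Fin n` (with `0 < n`) plays the role of the chain [n] = {1 < ⋯ < n}.
For an isotone map φ : P → [n], φ₋(p) = max{φ q : q < p} (max ∅ = bottom) and
φ⁺(p) = min{φ q : q > p} (min ∅ = top).
-/

variable {P : Type*} [PartialOrder P] [Fintype P]

/-- `φ₋(p) = max {φ q | q < p}`, the max of the empty set being the bottom element of `[n]`. -/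
def phiMinus [DecidableRel ((· < ·) : P → P → Prop)] {n : ℕ} (hn : 0 < n)
    (φ : P → Fin n) (p : P) : Fin n :=
  (insert (⟨0, hn⟩ : Fin n) ((Finset.univ.filter fun q => q < p).image φ)).sup'
    (Finset.insert_nonempty _ _) id

/-- `φ⁺(p) = min {φ q | p < q}`, the min of the empty set being the top element of `[n]`. -/
def phiPlus [DecidableRel ((· < ·) : P → P → Prop)] {n : ℕ} (hn : 0 < n)
    (φ : P → Fin n) (p : P) : Fin n :=
  (insert (⟨n - 1, by omega⟩ : Fin n) ((Finset.univ.filter fun q => p < q).image φ)).inf'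
    (Finset.insert_nonempty _ _) id

lemma phiMinus_le_iff [DecidableRel ((· < ·) : P → P → Prop)] {n : ℕ} (hn : 0 < n)
    (φ : P → Fin n) (p : P) (x : Fin n) :
    phiMinus hn φ p ≤ x ↔ ∀ q, q < p → φ q ≤ x := by
  simp only [phiMinus, Finset.sup'_le_iff, Finset.mem_insert, Finset.mem_image,
    Finset.mem_filter, Finset.mem_univ, true_and, id]
  constructor
  · intro h q hq
    exact h _ (Or.inr ⟨q, hq, rfl⟩)
  · rintro h b (rfl | ⟨q, hq, rfl⟩)
    · exact Fin.mk_le_of_le_val (Nat.zero_le _)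
    · exact h q hq

lemma le_phiPlus_iff [DecidableRel ((· < ·) : P → P → Prop)] {n : ℕ} (hn : 0 < n)
    (φ : P → Fin n) (p : P) (x : Fin n) :
    x ≤ phiPlus hn φ p ↔ ∀ q, p < q → x ≤ φ q := by
  simp only [phiPlus, Finset.le_inf'_iff, Finset.mem_insert, Finset.mem_image,
    Finset.mem_filter, Finset.mem_univ, true_and, id]
  constructor
  · intro h q hq
    exact h _ (Or.inr ⟨q, hq, rfl⟩)
  · rintro h b (rfl | ⟨q, hq, rfl⟩)
    · have := x.isLt; simp only [Fin.le_def]; omega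
    · exact h q hq

/-- The maps φ ↦ φ₋ and φ ↦ φ⁺ are well defined self-maps of Hom(P,[n]) (they send
isotone maps to isotone maps), and they form a Galois correspondence:
φ₋ ≤ ψ iff φ ≤ ψ⁺. -/
theorem stmt0 [DecidableRel ((· < ·) : P → P → Prop)] {n : ℕ} (hn : 0 < n) :
    (∀ φ : P → Fin n, Monotone φ → Monotone (phiMinus hn φ) ∧ Monotone (phiPlus hn φ)) ∧
      (∀ φ ψ : P → Fin n, Monotone φ → Monotone ψ →
        (phiMinus hn φ ≤ ψ ↔ φ ≤ phiPlus hn ψ)) := by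
  constructor
  · intro φ _
    constructor
    · intro p p' hpp'
      rw [phiMinus_le_iff]
      intro q hq
      exact (phiMinus_le_iff hn φ p' _).mp le_rfl q (lt_of_lt_of_le hq hpp')
    · intro p p' hpp'
      rw [le_phiPlus_iff]
      intro q hq
      exact (le_phiPlus_iff hn φ p _).mp le_rfl q (lt_of_le_of_lt hpp' hq)
  · intro φ ψ _ _
    constructor
    · intro h q
      rw [le_phiPlus_iff]
      intro p hp
      exact (phiMinus_le_iff hn φ p _).mp (h p) q hp
    · intro h p
      rw [phiMinus_le_iff]
      intro q hq
      exact (le_phiPlus_iff hn ψ q _).mp (h q) p hq
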